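/- Let A(z) = Σ_{i=0}^n A_i z^i be a polynomial pencil with A_i ∈ L(H,K), and let 𝓐(z) = 𝓐_0 + 𝓐_1 z be the augmented linear pencil on Hⁿ, Kⁿ with 𝓐_0 the block-lower-triangular Toeplitz matrix with blocks A_0,…,A_{n-1} and 𝓐_1 the block-upper-triangular Toeplitz matrix with blocks A_1,…,A_n. Given {R_j}_{j∈ℤ} ⊆ L(K,H), define 𝓡_j ∈ L(Kⁿ,Hⁿ) to be the block Toeplitz operator with (p,q) block R_{nj + p - q} (1 ≤ p, q ≤ n). Then {R_j} satisfies the polynomial fundamental equations Σ_{k=0}^n R_{j-n+k} A_{n-k} = δ_{j,0} I and Σ_{k=0}^n A_{n-k} R_{j-n+k} = δ_{j,0} I for all j ∈ ℤ if and only if {𝓡_j} satisfies the linear fundamental equations 𝓡_{j-1}𝓐_1 + 𝓡_j 𝓐_0 = δ_{j,0}𝓘 and 𝓐_1 𝓡_{j-1} + 𝓐_0 𝓡_j = δ_{j,0}𝓘 for all j ∈ ℤ. -/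

import Mathlib

/-- Block Toeplitz operator on finite direct sums: the `(p,q)` block is `f (p - q)`. -/
noncomputable def blockToeplitz {E F : Type*}
    [NormedAddCommGroup E] [NormedSpace ℂ E] [NormedAddCommGroup F] [NormedSpace ℂ F]
    (n : ℕ) (f : ℤ → (E →L[ℂ] F)) : (Fin n → E) →L[ℂ] (Fin n → F) :=
  ContinuousLinearMap.pi fun p : Fin n =>
    ∑ q : Fin n, (f ((p : ℤ) - (q : ℤ))).comp (ContinuousLinearMap.proj q)

section Aux

variable {H K : Type*} [NormedAddCommGroup H] [NormedSpace ℂ H]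
  [NormedAddCommGroup K] [NormedSpace ℂ K]

lemma blockToeplitz_apply (n : ℕ) (f : ℤ → (H →L[ℂ] K)) (x : Fin n → H) (p : Fin n) :
    blockToeplitz n f x p = ∑ q : Fin n, f ((p : ℤ) - (q : ℤ)) (x q) := by
  simp [blockToeplitz]

/-- `Aext` as a standalone definition. -/
noncomputable def AextDef (n : ℕ) (A : ℕ → (H →L[ℂ] K)) : ℤ → (H →L[ℂ] K) :=
  fun i => if 0 ≤ i ∧ i ≤ (n : ℤ) then A i.toNat else 0

lemma sum_fin_shift {M : Type*} [AddCommMonoid M] (n : ℕ) (h : ℤ → M) (a : ℤ) :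
    ∑ r : Fin n, h (a + r) = ∑ i ∈ Finset.Ioc (a - 1) (a - 1 + n), h i := by
  rw [Fin.sum_univ_eq_sum_range (fun r => h (a + r))]
  refine Finset.sum_nbij' (fun r => a + r) (fun i => (i - a).toNat) ?_ ?_ ?_ ?_ ?_ <;>
    intro x hx <;> simp only [Finset.mem_range, Finset.mem_Ioc] at * <;> omega

lemma sum_fin_shift_neg {M : Type*} [AddCommMonoid M] (n : ℕ) (h : ℤ → M) (a : ℤ) :
    ∑ r : Fin n, h (a - r) = ∑ i ∈ Finset.Ioc (a - n) a, h i := by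
  rw [Fin.sum_univ_eq_sum_range (fun r => h (a - r))]
  refine Finset.sum_nbij' (fun r => a - r) (fun i => (a - i).toNat) ?_ ?_ ?_ ?_ ?_ <;>
    intro x hx <;> simp only [Finset.mem_range, Finset.mem_Ioc] at * <;> omega

lemma sum_Ioc_add_sum_Ioc {M : Type*} [AddCommMonoid M] (h : ℤ → M) {a b c : ℤ}
    (hab : a ≤ b) (hbc : b ≤ c) :
    ∑ i ∈ Finset.Ioc a b, h i + ∑ i ∈ Finset.Ioc b c, h i = ∑ i ∈ Finset.Ioc a c, h i := by
  rw [← Finset.Ioc_union_Ioc_eq_Ioc hab hbc, Finset.sum_union]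
  rw [Finset.disjoint_left]
  intro x hx hx'
  simp only [Finset.mem_Ioc] at *
  omega

/-- shrink an Ioc-sum of a function vanishing outside `[0, n]` -/
lemma sum_Ioc_shrink {M : Type*} [AddCommMonoid M] (n : ℕ) (h : ℤ → M)
    (hvanish : ∀ i : ℤ, ¬ (0 ≤ i ∧ i ≤ (n : ℤ)) → h i = 0) {a b : ℤ}
    (ha : a ≤ -1) (hb : (n : ℤ) ≤ b) :
    ∑ i ∈ Finset.Ioc a b, h i = ∑ i ∈ Finset.Ioc (-1 : ℤ) (n : ℤ), h i := by
  refine (Finset.sum_subset ?_ ?_).symm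
  · intro i hi
    simp only [Finset.mem_Ioc] at *
    omega
  · intro i hi hni
    simp only [Finset.mem_Ioc] at hi hni
    exact hvanish i (by omega)

lemma sum_Ioc_to_range {M : Type*} [AddCommMonoid M] (n : ℕ) (h : ℤ → M) :
    ∑ i ∈ Finset.Ioc (-1 : ℤ) (n : ℤ), h i = ∑ k ∈ Finset.range (n + 1), h k := by
  have := sum_fin_shift (n + 1) h 0
  rw [Fin.sum_univ_eq_sum_range (fun r => h (0 + r))] at this
  simp only [zero_add] at this
  have e : Finset.Ioc (-1 : ℤ) (n : ℤ) = Finset.Ioc ((0:ℤ) - 1) (0 - 1 + ((n + 1 : ℕ) : ℤ)) := by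
    congr 1 <;> push_cast <;> ring
  rw [e]
  exact this.symm

/-- Key identity, `H`-side. -/
lemma keyH (n : ℕ) (A : ℕ → (H →L[ℂ] K)) (R : ℤ → (K →L[ℂ] H)) (j : ℤ) (p q : Fin n)
    (v : H) :
    (∑ r : Fin n, R ((n : ℤ) * (j - 1) + ((p : ℤ) - (r : ℤ))) (AextDef n A ((n : ℤ) + ((r : ℤ) - (q : ℤ))) v))
      + ∑ r : Fin n, R ((n : ℤ) * j + ((p : ℤ) - (r : ℤ))) (AextDef n A ((r : ℤ) - (q : ℤ)) v)
    = ∑ k ∈ Finset.range (n + 1), R ((n : ℤ) * j + (p : ℤ) - (q : ℤ) - (k : ℤ)) (A k v) := by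
  set c : ℤ := (n : ℤ) * j + (p : ℤ) with hc
  set h : ℤ → H := fun i => R (c - (q : ℤ) - i) (AextDef n A i v) with hh
  have hq : (q : ℤ) < n := by exact_mod_cast q.2
  have hq0 : (0 : ℤ) ≤ q := Int.natCast_nonneg _
  have hp : (p : ℤ) < n := by exact_mod_cast p.2
  have e1 : ∑ r : Fin n, R ((n : ℤ) * (j - 1) + ((p : ℤ) - (r : ℤ))) (AextDef n A ((n : ℤ) + ((r : ℤ) - (q : ℤ))) v)
      = ∑ i ∈ Finset.Ioc ((n : ℤ) - q - 1) ((n : ℤ) - q - 1 + n), h i := by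
    rw [← sum_fin_shift n h ((n : ℤ) - q)]
    refine Finset.sum_congr rfl fun r _ => ?_
    simp only [hh]
    congr 2 <;> ring
  have e2 : ∑ r : Fin n, R ((n : ℤ) * j + ((p : ℤ) - (r : ℤ))) (AextDef n A ((r : ℤ) - (q : ℤ)) v)
      = ∑ i ∈ Finset.Ioc (-(q : ℤ) - 1) (-(q : ℤ) - 1 + n), h i := by
    rw [← sum_fin_shift n h (-(q : ℤ))]
    refine Finset.sum_congr rfl fun r _ => ?_
    simp only [hh]
    congr 2 <;> ring
  rw [e1, e2, add_comm]
  have e3 : (-(q : ℤ) - 1 + n) = (n : ℤ) - q - 1 := by ring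
  rw [e3, sum_Ioc_add_sum_Ioc h (by omega) (by omega)]
  rw [sum_Ioc_shrink n h ?van (by omega) (by omega), sum_Ioc_to_range]
  · refine Finset.sum_congr rfl fun k hk => ?_
    simp only [Finset.mem_range] at hk
    simp only [hh, AextDef]
    rw [if_pos (by omega)]
    congr 2 <;> omega
  case van =>
    intro i hi
    simp only [hh, AextDef, if_neg hi]
    simp

/-- Key identity, `K`-side. -/
lemma keyK (n : ℕ) (A : ℕ → (H →L[ℂ] K)) (R : ℤ → (K →L[ℂ] H)) (j : ℤ) (p q : Fin n)
    (v : K) :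
    (∑ r : Fin n, AextDef n A ((n : ℤ) + ((p : ℤ) - (r : ℤ))) (R ((n : ℤ) * (j - 1) + ((r : ℤ) - (q : ℤ))) v))
      + ∑ r : Fin n, AextDef n A ((p : ℤ) - (r : ℤ)) (R ((n : ℤ) * j + ((r : ℤ) - (q : ℤ))) v)
    = ∑ k ∈ Finset.range (n + 1), A k (R ((n : ℤ) * j + (p : ℤ) - (q : ℤ) - (k : ℤ)) v) := by
  set c : ℤ := (n : ℤ) * j + (p : ℤ) - (q : ℤ) with hc
  set h : ℤ → K := fun i => AextDef n A i (R (c - i) v) with hh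
  have hq : (q : ℤ) < n := by exact_mod_cast q.2
  have hp : (p : ℤ) < n := by exact_mod_cast p.2
  have hp0 : (0 : ℤ) ≤ p := Int.natCast_nonneg _
  have e1 : ∑ r : Fin n, AextDef n A ((n : ℤ) + ((p : ℤ) - (r : ℤ))) (R ((n : ℤ) * (j - 1) + ((r : ℤ) - (q : ℤ))) v)
      = ∑ i ∈ Finset.Ioc ((p : ℤ)) ((n : ℤ) + p), h i := by
    have := sum_fin_shift_neg n h ((n : ℤ) + p)
    rw [show ((n : ℤ) + p - n) = (p : ℤ) by ring] at this
    rw [← this]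
    refine Finset.sum_congr rfl fun r _ => ?_
    simp only [hh, hc]
    congr 2 <;> ring
  have e2 : ∑ r : Fin n, AextDef n A ((p : ℤ) - (r : ℤ)) (R ((n : ℤ) * j + ((r : ℤ) - (q : ℤ))) v)
      = ∑ i ∈ Finset.Ioc ((p : ℤ) - n) (p : ℤ), h i := by
    rw [← sum_fin_shift_neg n h (p : ℤ)]
    refine Finset.sum_congr rfl fun r _ => ?_
    simp only [hh, hc]
    congr 2 <;> ring
  rw [e1, e2, add_comm, sum_Ioc_add_sum_Ioc h (by omega) (by omega)]
  rw [sum_Ioc_shrink n h ?van (by omega) (by omega), sum_Ioc_to_range]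
  · refine Finset.sum_congr rfl fun k hk => ?_
    simp only [Finset.mem_range] at hk
    simp only [hh, AextDef]
    rw [if_pos (by omega)]
    congr 2 <;> omega
  case van =>
    intro i hi
    simp only [hh, AextDef, if_neg hi]
    simp

lemma reindex_poly {M : Type*} [AddCommMonoid M] (n : ℕ) (j : ℤ) (g : ℤ → ℕ → M) :
    ∑ k : Fin (n + 1), g (j - (n : ℤ) + (k : ℤ)) (n - (k : ℕ)) =
      ∑ k ∈ Finset.range (n + 1), g (j - (k : ℤ)) k := by
  rw [Fin.sum_univ_eq_sum_range (fun k => g (j - (n : ℤ) + (k : ℤ)) (n - k))]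
  rw [← Finset.sum_range_reflect (fun k => g (j - (k : ℤ)) k) (n + 1)]
  refine Finset.sum_congr rfl fun k hk => ?_
  simp only [Finset.mem_range] at hk
  have h1 : n + 1 - 1 - k = n - k := by omega
  rw [h1]
  congr 1
  omega

lemma int_mul_self_aux (n : ℕ) (j a : ℤ) (h1 : -(n : ℤ) < a) (h2 : a < n)
    (h : (n : ℤ) * j + a = 0) : j = 0 := by
  by_contra hj
  rcases lt_or_gt_of_ne hj with h' | h'
  · have hle : (n : ℤ) * j ≤ n * (-1) :=
      mul_le_mul_of_nonneg_left (by omega) (Int.natCast_nonneg n)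
    linarith
  · have hle : (n : ℤ) * 1 ≤ n * j :=
      mul_le_mul_of_nonneg_left (by omega) (Int.natCast_nonneg n)
    linarith

end Aux

section Aux2

variable {H K : Type*} [NormedAddCommGroup H] [NormedSpace ℂ H]
  [NormedAddCommGroup K] [NormedSpace ℂ K]

lemma double_sum_swap_add {M α : Type*} [AddCommMonoid M] [Fintype α] (f g : α → α → M) :
    ((∑ r : α, ∑ q : α, f r q) + ∑ r : α, ∑ q : α, g r q)
      = ∑ q : α, ((∑ r : α, f r q) + ∑ r : α, g r q) := by
  have h1 := Finset.sum_comm (s := Finset.univ) (t := Finset.univ) (f := f)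
  have h2 := Finset.sum_comm (s := Finset.univ) (t := Finset.univ) (f := g)
  rw [h1, h2, ← Finset.sum_add_distrib]

lemma applied1 (n : ℕ) (A : ℕ → (H →L[ℂ] K)) (R : ℤ → (K →L[ℂ] H)) (j : ℤ)
    (x : Fin n → H) (p : Fin n) :
    ((blockToeplitz n fun i => R ((n : ℤ) * (j - 1) + i)).comp
        (blockToeplitz n fun i => AextDef n A ((n : ℤ) + i))
      + (blockToeplitz n fun i => R ((n : ℤ) * j + i)).comp
        (blockToeplitz n (AextDef n A))) x p
    = ∑ q : Fin n, ∑ k ∈ Finset.range (n + 1),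
        R ((n : ℤ) * j + (p : ℤ) - (q : ℤ) - (k : ℤ)) (A k (x q)) := by
  simp only [ContinuousLinearMap.add_apply, ContinuousLinearMap.comp_apply,
    Pi.add_apply, blockToeplitz_apply, map_sum]
  rw [double_sum_swap_add]
  exact Finset.sum_congr rfl fun q _ => keyH n A R j p q (x q)

lemma applied2 (n : ℕ) (A : ℕ → (H →L[ℂ] K)) (R : ℤ → (K →L[ℂ] H)) (j : ℤ)
    (x : Fin n → K) (p : Fin n) :
    ((blockToeplitz n fun i => AextDef n A ((n : ℤ) + i)).comp
        (blockToeplitz n fun i => R ((n : ℤ) * (j - 1) + i))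
      + (blockToeplitz n (AextDef n A)).comp
        (blockToeplitz n fun i => R ((n : ℤ) * j + i))) x p
    = ∑ q : Fin n, ∑ k ∈ Finset.range (n + 1),
        A k (R ((n : ℤ) * j + (p : ℤ) - (q : ℤ) - (k : ℤ)) (x q)) := by
  simp only [ContinuousLinearMap.add_apply, ContinuousLinearMap.comp_apply,
    Pi.add_apply, blockToeplitz_apply, map_sum]
  rw [double_sum_swap_add]
  exact Finset.sum_congr rfl fun q _ => keyK n A R j p q (x q)

lemma delta_sum {E : Type*} [AddCommMonoid E] (n : ℕ) (j : ℤ) (p : Fin n) (x : Fin n → E) :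
    (∑ q : Fin n, if (n : ℤ) * j + (p : ℤ) - (q : ℤ) = 0 then x q else 0)
      = if j = 0 then x p else 0 := by
  have hp : (p : ℤ) < n := by exact_mod_cast p.2
  by_cases hj : j = 0
  · subst hj
    rw [if_pos rfl]
    have e : ∀ q : Fin n, ((n : ℤ) * 0 + (p : ℤ) - (q : ℤ) = 0) = (q = p) := by
      intro q
      apply propext
      constructor
      · intro h
        exact Fin.ext (by omega)
      · rintro rfl
        ring
    simp only [e]
    rw [Finset.sum_ite_eq' Finset.univ p x]
    simp
  · rw [if_neg hj]
    refine Finset.sum_eq_zero fun q _ => ?_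
    rw [if_neg]
    intro h
    have hq : (q : ℤ) < n := by exact_mod_cast q.2
    have hp0 : (0 : ℤ) ≤ p := Int.natCast_nonneg _
    have hq0 : (0 : ℤ) ≤ q := Int.natCast_nonneg _
    exact hj (int_mul_self_aux n j ((p : ℤ) - (q : ℤ)) (by omega) (by omega) (by linarith))

end Aux2

section Aux3

variable {H K : Type*} [NormedAddCommGroup H] [NormedSpace ℂ H]
  [NormedAddCommGroup K] [NormedSpace ℂ K]

lemma build1 (n : ℕ) (A : ℕ → (H →L[ℂ] K)) (R : ℤ → (K →L[ℂ] H))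
    (P1 : ∀ m : ℤ, ∑ k ∈ Finset.range (n + 1), (R (m - (k : ℤ))).comp (A k)
      = if m = 0 then (1 : H →L[ℂ] H) else 0) (j : ℤ) :
    (blockToeplitz n fun i => R ((n : ℤ) * (j - 1) + i)).comp
        (blockToeplitz n fun i => AextDef n A ((n : ℤ) + i))
      + (blockToeplitz n fun i => R ((n : ℤ) * j + i)).comp
        (blockToeplitz n (AextDef n A))
    = if j = 0 then (1 : (Fin n → H) →L[ℂ] (Fin n → H)) else 0 := by
  refine ContinuousLinearMap.ext fun x => funext fun p => ?_
  rw [applied1 n A R j x p]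
  have e : ∀ q : Fin n, ∑ k ∈ Finset.range (n + 1),
      R ((n : ℤ) * j + (p : ℤ) - (q : ℤ) - (k : ℤ)) (A k (x q))
      = if (n : ℤ) * j + (p : ℤ) - (q : ℤ) = 0 then x q else 0 := by
    intro q
    have h := congrArg (fun T : H →L[ℂ] H => T (x q)) (P1 ((n : ℤ) * j + (p : ℤ) - (q : ℤ)))
    simp only [ContinuousLinearMap.sum_apply, ContinuousLinearMap.comp_apply] at h
    rw [h]
    split_ifs <;> simp
  rw [Finset.sum_congr rfl fun q _ => e q, delta_sum n j p x]
  split_ifs <;> simp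

lemma build2 (n : ℕ) (A : ℕ → (H →L[ℂ] K)) (R : ℤ → (K →L[ℂ] H))
    (P2 : ∀ m : ℤ, ∑ k ∈ Finset.range (n + 1), (A k).comp (R (m - (k : ℤ)))
      = if m = 0 then (1 : K →L[ℂ] K) else 0) (j : ℤ) :
    (blockToeplitz n fun i => AextDef n A ((n : ℤ) + i)).comp
        (blockToeplitz n fun i => R ((n : ℤ) * (j - 1) + i))
      + (blockToeplitz n (AextDef n A)).comp
        (blockToeplitz n fun i => R ((n : ℤ) * j + i))
    = if j = 0 then (1 : (Fin n → K) →L[ℂ] (Fin n → K)) else 0 := by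
  refine ContinuousLinearMap.ext fun x => funext fun p => ?_
  rw [applied2 n A R j x p]
  have e : ∀ q : Fin n, ∑ k ∈ Finset.range (n + 1),
      A k (R ((n : ℤ) * j + (p : ℤ) - (q : ℤ) - (k : ℤ)) (x q))
      = if (n : ℤ) * j + (p : ℤ) - (q : ℤ) = 0 then x q else 0 := by
    intro q
    have h := congrArg (fun T : K →L[ℂ] K => T (x q)) (P2 ((n : ℤ) * j + (p : ℤ) - (q : ℤ)))
    simp only [ContinuousLinearMap.sum_apply, ContinuousLinearMap.comp_apply] at h
    rw [h]
    split_ifs <;> simp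
  rw [Finset.sum_congr rfl fun q _ => e q, delta_sum n j p x]
  split_ifs <;> simp

lemma extract1 (n : ℕ) (hn : 1 ≤ n) (A : ℕ → (H →L[ℂ] K)) (R : ℤ → (K →L[ℂ] H))
    (h : ∀ j : ℤ, (blockToeplitz n fun i => R ((n : ℤ) * (j - 1) + i)).comp
        (blockToeplitz n fun i => AextDef n A ((n : ℤ) + i))
      + (blockToeplitz n fun i => R ((n : ℤ) * j + i)).comp
        (blockToeplitz n (AextDef n A))
      = if j = 0 then (1 : (Fin n → H) →L[ℂ] (Fin n → H)) else 0) (m : ℤ) :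
    ∑ k ∈ Finset.range (n + 1), (R (m - (k : ℤ))).comp (A k)
      = if m = 0 then (1 : H →L[ℂ] H) else 0 := by
  have hn' : (0 : ℤ) < n := by exact_mod_cast hn
  have hmod0 : 0 ≤ m % n := Int.emod_nonneg m (by omega)
  have hmodn : m % n < n := Int.emod_lt_of_pos _ hn'
  set jm : ℤ := m / n with hjm
  refine ContinuousLinearMap.ext fun v => ?_
  set p : Fin n := ⟨(m % n).toNat, by omega⟩ with hpdef
  set q : Fin n := ⟨0, by omega⟩ with hqdef
  have hpv : (p : ℤ) = m % n := Int.toNat_of_nonneg hmod0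
  have hqv : (q : ℤ) = 0 := rfl
  have hsum : (n : ℤ) * jm + (p : ℤ) - (q : ℤ) = m := by
    have hd := Int.mul_ediv_add_emod m (n : ℤ)
    rw [hpv, hqv, hjm]
    linarith
  have happ : (∑ q' : Fin n, ∑ k ∈ Finset.range (n + 1),
        R ((n : ℤ) * jm + (p : ℤ) - (q' : ℤ) - (k : ℤ)) (A k ((Pi.single q v : Fin n → H) q')))
      = (if jm = 0 then (1 : (Fin n → H) →L[ℂ] (Fin n → H)) else 0) (Pi.single q v) p := by
    rw [← applied1 n A R jm (Pi.single q v) p, h jm]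
  have h0 : ∀ b ∈ Finset.univ, b ≠ q → (∑ k ∈ Finset.range (n + 1),
      R ((n : ℤ) * jm + (p : ℤ) - (b : ℤ) - (k : ℤ)) (A k ((Pi.single q v : Fin n → H) b))) = 0 := by
    intro b _ hb
    refine Finset.sum_eq_zero fun k _ => ?_
    rw [Pi.single_eq_of_ne hb]
    simp
  rw [Finset.sum_eq_single q h0 (fun hq => absurd (Finset.mem_univ q) hq)] at happ
  rw [hsum, Pi.single_eq_same] at happ
  rw [ContinuousLinearMap.sum_apply]
  simp only [ContinuousLinearMap.comp_apply]
  rw [happ]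
  by_cases hm : m = 0
  · have hj0 : jm = 0 := by rw [hjm, hm]; exact Int.zero_ediv _
    have hpq : p = q := by
      apply Fin.ext
      have h1 : (p : ℤ) = (q : ℤ) := by rw [hpv, hqv, hm]; simp
      exact_mod_cast h1
    rw [hm, hj0, hpq]
    simp
  · by_cases hj0 : jm = 0
    · have hpq : p ≠ q := by
        intro he
        apply hm
        have h1 : (p : ℤ) = 0 := by rw [he, hqv]
        rw [← hsum, hj0, h1, hqv]
        ring
      rw [hj0]
      simp [Pi.single_eq_of_ne hpq, hm]
    · simp [hj0, hm]

lemma extract2 (n : ℕ) (hn : 1 ≤ n) (A : ℕ → (H →L[ℂ] K)) (R : ℤ → (K →L[ℂ] H))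
    (h : ∀ j : ℤ, (blockToeplitz n fun i => AextDef n A ((n : ℤ) + i)).comp
        (blockToeplitz n fun i => R ((n : ℤ) * (j - 1) + i))
      + (blockToeplitz n (AextDef n A)).comp
        (blockToeplitz n fun i => R ((n : ℤ) * j + i))
      = if j = 0 then (1 : (Fin n → K) →L[ℂ] (Fin n → K)) else 0) (m : ℤ) :
    ∑ k ∈ Finset.range (n + 1), (A k).comp (R (m - (k : ℤ)))
      = if m = 0 then (1 : K →L[ℂ] K) else 0 := by
  have hn' : (0 : ℤ) < n := by exact_mod_cast hn
  have hmod0 : 0 ≤ m % n := Int.emod_nonneg m (by omega)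
  have hmodn : m % n < n := Int.emod_lt_of_pos _ hn'
  set jm : ℤ := m / n with hjm
  refine ContinuousLinearMap.ext fun v => ?_
  set p : Fin n := ⟨(m % n).toNat, by omega⟩ with hpdef
  set q : Fin n := ⟨0, by omega⟩ with hqdef
  have hpv : (p : ℤ) = m % n := Int.toNat_of_nonneg hmod0
  have hqv : (q : ℤ) = 0 := rfl
  have hsum : (n : ℤ) * jm + (p : ℤ) - (q : ℤ) = m := by
    have hd := Int.mul_ediv_add_emod m (n : ℤ)
    rw [hpv, hqv, hjm]
    linarith
  have happ : (∑ q' : Fin n, ∑ k ∈ Finset.range (n + 1),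
        A k (R ((n : ℤ) * jm + (p : ℤ) - (q' : ℤ) - (k : ℤ)) ((Pi.single q v : Fin n → K) q')))
      = (if jm = 0 then (1 : (Fin n → K) →L[ℂ] (Fin n → K)) else 0) (Pi.single q v) p := by
    rw [← applied2 n A R jm (Pi.single q v) p, h jm]
  have h0 : ∀ b ∈ Finset.univ, b ≠ q → (∑ k ∈ Finset.range (n + 1),
      A k (R ((n : ℤ) * jm + (p : ℤ) - (b : ℤ) - (k : ℤ)) ((Pi.single q v : Fin n → K) b))) = 0 := by
    intro b _ hb
    refine Finset.sum_eq_zero fun k _ => ?_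
    rw [Pi.single_eq_of_ne hb]
    simp
  rw [Finset.sum_eq_single q h0 (fun hq => absurd (Finset.mem_univ q) hq)] at happ
  rw [hsum, Pi.single_eq_same] at happ
  rw [ContinuousLinearMap.sum_apply]
  simp only [ContinuousLinearMap.comp_apply]
  rw [happ]
  by_cases hm : m = 0
  · have hj0 : jm = 0 := by rw [hjm, hm]; exact Int.zero_ediv _
    have hpq : p = q := by
      apply Fin.ext
      have h1 : (p : ℤ) = (q : ℤ) := by rw [hpv, hqv, hm]; simp
      exact_mod_cast h1
    rw [hm, hj0, hpq]
    simp
  · by_cases hj0 : jm = 0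
    · have hpq : p ≠ q := by
        intro he
        apply hm
        have h1 : (p : ℤ) = 0 := by rw [he, hqv]
        rw [← hsum, hj0, h1, hqv]
        ring
      rw [hj0]
      simp [Pi.single_eq_of_ne hpq, hm]
    · simp [hj0, hm]

end Aux3

/-- for a polynomial pencil `A(z) = Σ_{i=0}^n A_i z^i`, the coefficients
`{R_j}` satisfy the polynomial fundamental equations iff the block Toeplitz operators
`𝓡_j` (with `(p,q)` block `R_{nj+p-q}`) satisfy the linear fundamental equations for the
augmented linear pencil `𝓐₀ + 𝓐₁ z` (where `𝓐₀` has `(p,q)` block `A_{p-q}` for `p ≥ q`,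
`𝓐₁` has `(p,q)` block `A_{n+p-q}` for `q ≥ p`, and `0` otherwise). -/
theorem polynomial_pencil_augmented_fundamental_equations
    {H K : Type*} [NormedAddCommGroup H] [NormedSpace ℂ H] [CompleteSpace H]
    [NormedAddCommGroup K] [NormedSpace ℂ K] [CompleteSpace K]
    (n : ℕ) (hn : 1 ≤ n) (A : ℕ → (H →L[ℂ] K)) (R : ℤ → (K →L[ℂ] H)) :
    -- `Aext i = A_i` for `0 ≤ i ≤ n` and `0` otherwise
    let Aext : ℤ → (H →L[ℂ] K) := fun i => if 0 ≤ i ∧ i ≤ (n : ℤ) then A i.toNat else 0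
    let 𝓐₀ : (Fin n → H) →L[ℂ] (Fin n → K) := blockToeplitz n Aext
    let 𝓐₁ : (Fin n → H) →L[ℂ] (Fin n → K) := blockToeplitz n fun i => Aext ((n : ℤ) + i)
    let 𝓡 : ℤ → ((Fin n → K) →L[ℂ] (Fin n → H)) :=
      fun j => blockToeplitz n fun i => R ((n : ℤ) * j + i)
    ((∀ j : ℤ, ∑ k : Fin (n + 1), (R (j - n + k)).comp (A (n - k)) =
        if j = 0 then (1 : H →L[ℂ] H) else 0) ∧
     (∀ j : ℤ, ∑ k : Fin (n + 1), (A (n - k)).comp (R (j - n + k)) =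
        if j = 0 then (1 : K →L[ℂ] K) else 0)) ↔
    ((∀ j : ℤ, (𝓡 (j - 1)).comp 𝓐₁ + (𝓡 j).comp 𝓐₀ =
        if j = 0 then (1 : (Fin n → H) →L[ℂ] (Fin n → H)) else 0) ∧
     (∀ j : ℤ, 𝓐₁.comp (𝓡 (j - 1)) + 𝓐₀.comp (𝓡 j) =
        if j = 0 then (1 : (Fin n → K) →L[ℂ] (Fin n → K)) else 0)) := by
  intro Aext 𝓐₀ 𝓐₁ 𝓡
  constructor
  · rintro ⟨h1, h2⟩
    have Q1 : ∀ m : ℤ, ∑ k ∈ Finset.range (n + 1), (R (m - (k : ℤ))).comp (A k)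
        = if m = 0 then (1 : H →L[ℂ] H) else 0 := fun m => by
      rw [← reindex_poly n m (fun a b => (R a).comp (A b))]
      exact h1 m
    have Q2 : ∀ m : ℤ, ∑ k ∈ Finset.range (n + 1), (A k).comp (R (m - (k : ℤ)))
        = if m = 0 then (1 : K →L[ℂ] K) else 0 := fun m => by
      rw [← reindex_poly n m (fun a b => (A b).comp (R a))]
      exact h2 m
    exact ⟨fun j => build1 n A R Q1 j, fun j => build2 n A R Q2 j⟩
  · rintro ⟨h1, h2⟩
    refine ⟨fun j => ?_, fun j => ?_⟩
    · rw [reindex_poly n j (fun a b => (R a).comp (A b))]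
      exact extract1 n hn A R (fun j' => h1 j') j
    · rw [reindex_poly n j (fun a b => (A b).comp (R a))]
      exact extract2 n hn A R (fun j' => h2 j') j
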